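/- Let G be a finite group, p a prime, and M a proper subgroup of G whose order is divisible by p^{e+1} and such that M contains the normalizer N_G(P) for every p-subgroup P of M with |P| > p^e. Then for every Sylow p-subgroup S of M, S is in fact a Sylow p-subgroup of G. -/

import Mathlib

/-- If `M < G` is a proper subgroup with `p^(e+1) ∣ |M|` such that `M`
contains `N_G(P)` for every `p`-subgroup `P ≤ M` with `|P| > p^e`, then every Sylow
`p`-subgroup of `M` is a Sylow `p`-subgroup of `G`. -/
theorem stmt0 {G : Type*} [Group G] [Fintype G] (p : ℕ) [Fact p.Prime] (e : ℕ)
    (M : Subgroup G) (hM : M ≠ ⊤)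
    (hdvdG : p ^ (e + 1) ∣ Nat.card G)
    (hdvdM : p ^ (e + 1) ∣ Nat.card M)
    (hnorm : ∀ P : Subgroup G, P ≤ M → IsPGroup p P → p ^ e < Nat.card P →
      Subgroup.normalizer (P : Set G) ≤ M) :
    ∀ S : Sylow p M, ∃ T : Sylow p G,
      Subgroup.map M.subtype (S : Subgroup M) = (T : Subgroup G) := by
  intro S
  set S' : Subgroup G := Subgroup.map M.subtype (S : Subgroup M) with hS'def
  have hS'le : S' ≤ M := Subgroup.map_subtype_le _
  have hS'p : IsPGroup p S' := S.isPGroup'.map M.subtype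
  have hcardS' : Nat.card S' = Nat.card S :=
    (Nat.card_congr ((S : Subgroup M).equivMapOfInjective M.subtype
      M.subtype_injective).toEquiv).symm
  have hdvdS : p ^ (e + 1) ∣ Nat.card S' := by
    rw [hcardS', Sylow.card_eq_multiplicity]
    exact Nat.pow_dvd_pow p <|
      (Nat.Prime.pow_dvd_iff_le_factorization (Fact.out) Nat.card_pos.ne').mp hdvdM
  have hltS : p ^ e < Nat.card S' := by
    calc p ^ e < p ^ (e + 1) :=
          Nat.pow_lt_pow_succ (Fact.out : p.Prime).one_lt
      _ ≤ Nat.card S' := Nat.le_of_dvd Nat.card_pos hdvdS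
  refine ⟨⟨S', hS'p, ?_⟩, rfl⟩
  intro Q hQ hle
  by_contra hne
  have hlt' : S' < Q := lt_of_le_of_ne hle (Ne.symm hne)
  -- Q is a finite p-group, hence nilpotent, hence satisfies the normalizer condition
  have hnil : Group.IsNilpotent Q := hQ.isNilpotent
  have hnc : NormalizerCondition Q := normalizerCondition_of_isNilpotent
  set H : Subgroup Q := S'.subgroupOf Q with hHdef
  have hHne : H ≠ ⊤ := by
    rw [hHdef, Ne, Subgroup.subgroupOf_eq_top]
    exact fun h => hlt'.not_ge h
  have hHlt : H < Subgroup.normalizer (H : Set Q) := hnc H (lt_top_iff_ne_top.mpr hHne)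
  obtain ⟨x, hxN, hxH⟩ := SetLike.exists_of_lt hHlt
  -- x normalizes S' in G
  have hxnorm : (x : G) ∈ Subgroup.normalizer (S' : Set G) := by
    rw [Subgroup.mem_normalizer_iff]
    intro g
    constructor
    · intro hg
      have hgQ : g ∈ Q := hle hg
      have : (⟨g, hgQ⟩ : Q) ∈ H := by rwa [Subgroup.mem_subgroupOf]
      have := (Subgroup.mem_normalizer_iff.mp hxN ⟨g, hgQ⟩).mp this
      rwa [Subgroup.mem_subgroupOf] at this
    · intro hg
      have hgQ' : (x : G) * g * (x : G)⁻¹ ∈ Q := hle hg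
      have hgQ : g ∈ Q := by
        have := Q.mul_mem (Q.mul_mem (Q.inv_mem x.2) hgQ') x.2
        simpa [mul_assoc] using this
      have hc : (x * ⟨g, hgQ⟩ * x⁻¹ : Q) ∈ H := by
        rw [Subgroup.mem_subgroupOf]
        exact hg
      have := (Subgroup.mem_normalizer_iff.mp hxN ⟨g, hgQ⟩).mpr hc
      rwa [Subgroup.mem_subgroupOf] at this
  have hNleM : Subgroup.normalizer (S' : Set G) ≤ M := hnorm S' hS'le hS'p hltS
  -- R = N_G(S') ⊓ Q is a p-subgroup of M strictly containing S'
  set R : Subgroup G := Subgroup.normalizer (S' : Set G) ⊓ Q with hRdef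
  have hRp : IsPGroup p R := hQ.to_le inf_le_right
  have hRM : R ≤ M := le_trans inf_le_left hNleM
  have hS'R : S' ≤ R := le_inf Subgroup.le_normalizer hle
  have hxR : (x : G) ∈ R := ⟨hxnorm, x.2⟩
  have hxS' : (x : G) ∉ S' := by
    intro h
    exact hxH (by rwa [hHdef, Subgroup.mem_subgroupOf])
  have hS'ltR : S' < R := lt_of_le_of_ne hS'R (fun h => hxS' (h ▸ hxR))
  -- pull back to M
  set R' : Subgroup M := R.subgroupOf M with hR'def
  have hR'p : IsPGroup p R' := hRp.comap_subtype
  have hSR' : (S : Subgroup M) ≤ R' := by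
    intro s hs
    rw [hR'def, Subgroup.mem_subgroupOf]
    exact hS'R ⟨s, hs, rfl⟩
  have hR'eq : R' = S := S.is_maximal' hR'p hSR'
  have hcardR' : Nat.card R' = Nat.card R :=
    Nat.card_congr (Subgroup.subgroupOfEquivOfLe hRM).toEquiv
  have : R ≤ S' := by
    have hcard : Nat.card R ≤ Nat.card S' := by
      rw [hcardS', ← hR'eq, hcardR']
    exact le_of_eq (Subgroup.eq_of_le_of_card_ge hS'R hcard).symm
  exact hxS' (this hxR)
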